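/- If a triangle-free graph G admits an interval t-coloring, then t ≤ |V(G)| − 1. -/

import Mathlib

open SimpleGraph

/-- A proper edge-coloring: edges sharing a vertex get distinct colors. -/
def EProper {V : Type*} (G : SimpleGraph V) (c : Sym2 V → ℕ) : Prop :=
  ∀ v a b, G.Adj v a → G.Adj v b → a ≠ b → c s(v, a) ≠ c s(v, b)

/-- The spectrum of a vertex: set of colors on incident edges. -/
def specS {V : Type*} (G : SimpleGraph V) (c : Sym2 V → ℕ) (v : V) : Set ℕ :=
  {k | ∃ u, G.Adj v u ∧ c s(v, u) = k}

/-- An interval t-coloring: proper, uses exactly the colors 1..t, and each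
vertex's spectrum is an interval of integers. -/
def IsIntCol {V : Type*} (G : SimpleGraph V) (c : Sym2 V → ℕ) (t : ℕ) : Prop :=
  EProper G c ∧
  (∀ e ∈ G.edgeSet, 1 ≤ c e ∧ c e ≤ t) ∧
  (∀ k, 1 ≤ k → k ≤ t → ∃ e ∈ G.edgeSet, c e = k) ∧
  (∀ v, ∀ a ∈ specS G c v, ∀ b ∈ specS G c v,
     ∀ k, a ≤ k → k ≤ b → k ∈ specS G c v)

/-- Interval colorability. -/
def IntColorable {V : Type*} (G : SimpleGraph V) : Prop :=
  ∃ t c, IsIntCol G c t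

/-- Least t admitting an interval t-coloring. -/
noncomputable def wInt {V : Type*} (G : SimpleGraph V) : ℕ :=
  sInf {t | ∃ c, IsIntCol G c t}

/-- Greatest t admitting an interval t-coloring. -/
noncomputable def WInt {V : Type*} (G : SimpleGraph V) : ℕ :=
  sSup {t | ∃ c, IsIntCol G c t}

/-- The set of values `max S(v,c)` over vertices v. -/
def maxSpecSet {V : Type*} (G : SimpleGraph V) (c : Sym2 V → ℕ) : Set ℕ :=
  {m | ∃ v, sSup (specS G c v) = m}

/-- The sorted sequence of largest incident colors is continuous: every integer
between its minimum and maximum is attained. -/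
def MaxSpecContinuous {V : Type*} (G : SimpleGraph V) (c : Sym2 V → ℕ) : Prop :=
  ∀ k, sInf (maxSpecSet G c) ≤ k → k ≤ sSup (maxSpecSet G c) → k ∈ maxSpecSet G c

/-- The composition (lexicographic product) G[H]. -/
def lexComp {V W : Type*} (G : SimpleGraph V) (H : SimpleGraph W) :
    SimpleGraph (V × W) where
  Adj a b := G.Adj a.1 b.1 ∨ (a.1 = b.1 ∧ H.Adj a.2 b.2)
  symm := by
    constructor
    intro a b h
    rcases h with h | ⟨h1, h2⟩
    · exact Or.inl h.symm
    · exact Or.inr ⟨h1.symm, h2.symm⟩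
  loopless := by
    constructor
    intro a h
    rcases h with h | ⟨_, h2⟩
    · exact G.loopless.irrefl _ h
    · exact H.loopless.irrefl _ h2

/-- The chromatic index: least number of colors in a proper edge-coloring. -/
noncomputable def chromIndex {V : Type*} (G : SimpleGraph V) : ℕ :=
  sInf {k | ∃ c, EProper G c ∧ ∀ e ∈ G.edgeSet, c e < k}

namespace IC

variable {V : Type*}

structure BChain (G : SimpleGraph V) (c : Sym2 V → ℕ) (t : ℕ) where
  k : ℕ
  v : ℕ → V
  a : ℕ → ℕ
  hk : 1 ≤ k
  ha0 : a 0 = t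
  hdec : ∀ i, 1 ≤ i → i ≤ k → a i ≤ a (i-1)
  hmem : ∀ i, 1 ≤ i → i ≤ k → ∀ x, a i ≤ x → x ≤ a (i-1) → x ∈ specS G c (v i)
  hlink : ∀ i, 1 ≤ i → i < k → G.Adj (v i) (v (i+1)) ∧ c s(v i, v (i+1)) = a i

variable {G : SimpleGraph V} {c : Sym2 V → ℕ} {t : ℕ}

def IntHyp (G : SimpleGraph V) (c : Sym2 V → ℕ) : Prop :=
  ∀ v, ∀ a ∈ specS G c v, ∀ b ∈ specS G c v, ∀ k, a ≤ k → k ≤ b → k ∈ specS G c v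

lemma BChain.mono (C : BChain G c t) : ∀ p q, p ≤ q → q ≤ C.k → C.a q ≤ C.a p := by
  intro p q hpq hq
  induction q with
  | zero => simp [Nat.le_zero.mp hpq]
  | succ n ih =>
    rcases Nat.lt_or_ge p (n+1) with h | h
    · have h1 : C.a (n+1) ≤ C.a n := by
        have := C.hdec (n+1) (by omega) hq
        simpa using this
      exact le_trans h1 (ih (by omega) (by omega))
    · have : p = n + 1 := by omega
      simp [this]

lemma BChain.a_le_t (C : BChain G c t) (i : ℕ) (hi : i ≤ C.k) : C.a i ≤ t := by
  have := C.mono 0 i (Nat.zero_le _) hi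
  rw [C.ha0] at this; exact this

lemma spec_symm {x y : V} (h : G.Adj x y) : c s(x,y) ∈ specS G c y := by
  refine ⟨x, h.symm, ?_⟩
  rw [Sym2.eq_swap]

lemma spec_self {x y : V} (h : G.Adj x y) : c s(x,y) ∈ specS G c x := ⟨y, h, rfl⟩

/-- Truncate a chain at block `i`, raising/lowering its bottom cut to `γ`. -/
def TR (hInt : IntHyp G c) (C : BChain G c t) (i γ : ℕ) (h1 : 1 ≤ i) (h2 : i ≤ C.k)
    (h3 : γ ≤ C.a (i-1)) (h4 : γ ∈ specS G c (C.v i)) : BChain G c t where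
  k := i
  v := C.v
  a := fun l => if l = i then γ else C.a l
  hk := h1
  ha0 := by simp only [if_neg (by omega : ¬(0 = i))]; exact C.ha0
  hdec := by
    intro l hl1 hli
    rcases Nat.lt_or_ge l i with h | h
    · simp only [if_neg (by omega : ¬(l = i)), if_neg (by omega : ¬(l-1 = i))]
      exact C.hdec l hl1 (by omega)
    · have : l = i := by omega
      subst this
      simp only [if_pos rfl, if_neg (by omega : ¬(l-1 = l))]
      exact h3
  hmem := by
    intro l hl1 hli x hx1 hx2
    rcases Nat.lt_or_ge l i with h | h
    · simp only [if_neg (by omega : ¬(l = i)), if_neg (by omega : ¬(l-1 = i))] at hx1 hx2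
      exact C.hmem l hl1 (by omega) x hx1 hx2
    · have : l = i := by omega
      subst this
      simp only [if_pos rfl, if_neg (by omega : ¬(l-1 = l))] at hx1 hx2
      have hup : C.a (l-1) ∈ specS G c (C.v l) :=
        C.hmem l hl1 h2 (C.a (l-1)) (C.hdec l hl1 h2) le_rfl
      exact hInt _ _ h4 _ hup x hx1 hx2
  hlink := by
    intro l hl1 hlk
    simp only [if_neg (by omega : ¬(l = i))]
    exact C.hlink l hl1 (by omega)

@[simp] lemma TR_k (hInt : IntHyp G c) (C : BChain G c t) (i γ h1 h2 h3 h4) :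
    (TR hInt C i γ h1 h2 h3 h4).k = i := rfl
@[simp] lemma TR_v (hInt : IntHyp G c) (C : BChain G c t) (i γ h1 h2 h3 h4) :
    (TR hInt C i γ h1 h2 h3 h4).v = C.v := rfl
lemma TR_a (hInt : IntHyp G c) (C : BChain G c t) (i γ h1 h2 h3 h4) (l : ℕ) :
    (TR hInt C i γ h1 h2 h3 h4).a l = if l = i then γ else C.a l := rfl

/-- Extend a chain at the bottom by one new block `[γ', bottom]` at a new vertex. -/
def EXT (hInt : IntHyp G c) (C : BChain G c t) (u : V) (γ' : ℕ)
    (hadj : G.Adj (C.v C.k) u) (hcol : c s(C.v C.k, u) = C.a C.k)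
    (hle : γ' ≤ C.a C.k) (hsp : γ' ∈ specS G c u) : BChain G c t where
  k := C.k + 1
  v := fun l => if l = C.k + 1 then u else C.v l
  a := fun l => if l = C.k + 1 then γ' else C.a l
  hk := by omega
  ha0 := by simp only [if_neg (by omega : ¬(0 = C.k+1))]; exact C.ha0
  hdec := by
    intro l hl1 hli
    rcases Nat.lt_or_ge l (C.k+1) with h | h
    · simp only [if_neg (by omega : ¬(l = C.k+1)), if_neg (by omega : ¬(l-1 = C.k+1))]
      exact C.hdec l hl1 (by omega)
    · have hleq : l = C.k + 1 := by omega
      subst hleq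
      simp only [if_pos rfl, if_neg (by omega : ¬(C.k+1-1 = C.k+1)),
        (by omega : C.k+1-1 = C.k), if_true, if_neg (by omega : ¬(C.k = C.k+1))]
      exact hle
  hmem := by
    intro l hl1 hli x hx1 hx2
    rcases Nat.lt_or_ge l (C.k+1) with h | h
    · simp only [if_neg (by omega : ¬(l = C.k+1)), if_neg (by omega : ¬(l-1 = C.k+1))] at hx1 hx2 ⊢
      exact C.hmem l hl1 (by omega) x hx1 hx2
    · have hleq : l = C.k + 1 := by omega
      subst hleq
      simp only [if_pos rfl, if_neg (by omega : ¬(C.k+1-1 = C.k+1)),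
        (by omega : C.k+1-1 = C.k), if_true, if_neg (by omega : ¬(C.k = C.k+1))] at hx1 hx2 ⊢
      have hup : C.a C.k ∈ specS G c u := by
        rw [← hcol]; exact spec_symm hadj
      exact hInt _ _ hsp _ hup x hx1 hx2
  hlink := by
    intro l hl1 hlk
    rcases Nat.lt_or_ge l C.k with h | h
    · simp only [if_neg (by omega : ¬(l = C.k+1)), if_neg (by omega : ¬(l+1 = C.k+1))]
      exact C.hlink l hl1 h
    · have hleq : l = C.k := by omega
      subst hleq
      simp only [if_neg (by omega : ¬(C.k = C.k+1)), if_pos rfl]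
      exact ⟨hadj, hcol⟩

@[simp] lemma EXT_k (hInt : IntHyp G c) (C : BChain G c t) (u γ' hadj hcol hle hsp) :
    (EXT hInt C u γ' hadj hcol hle hsp).k = C.k + 1 := rfl
lemma EXT_v (hInt : IntHyp G c) (C : BChain G c t) (u γ' hadj hcol hle hsp) (l : ℕ) :
    (EXT hInt C u γ' hadj hcol hle hsp).v l = if l = C.k + 1 then u else C.v l := rfl
lemma EXT_a (hInt : IntHyp G c) (C : BChain G c t) (u γ' hadj hcol hle hsp) (l : ℕ) :
    (EXT hInt C u γ' hadj hcol hle hsp).a l = if l = C.k + 1 then γ' else C.a l := rfl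

/-- Attach the suffix of `C` starting at block `j` below the chain `E`,
joining via an edge from the bottom vertex of `E` to `C.v j` of color `E.a E.k`. -/
def ATTACH (hInt : IntHyp G c) (E C : BChain G c t) (j : ℕ) (hj1 : 1 ≤ j) (hj2 : j ≤ C.k)
    (hadj : G.Adj (E.v E.k) (C.v j)) (hcol : c s(E.v E.k, C.v j) = E.a E.k)
    (hle : C.a j ≤ E.a E.k) : BChain G c t where
  k := E.k + 1 + (C.k - j)
  v := fun l => if l ≤ E.k then E.v l else C.v (l - E.k + j - 1)
  a := fun l => if l ≤ E.k then E.a l else C.a (l - E.k + j - 1)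
  hk := by omega
  ha0 := by simp only [if_pos (Nat.zero_le _)]; exact E.ha0
  hdec := by
    intro l hl1 hlk
    rcases Nat.lt_or_ge l (E.k + 1) with h | h
    · simp only [if_pos (by omega : l ≤ E.k), if_pos (by omega : l - 1 ≤ E.k)]
      exact E.hdec l hl1 (by omega)
    · rcases Nat.lt_or_ge l (E.k + 2) with h2 | h2
      · have hleq : l = E.k + 1 := by omega
        subst hleq
        simp only [if_neg (by omega : ¬(E.k + 1 ≤ E.k)), if_pos (by omega : E.k+1-1 ≤ E.k),
          (by omega : E.k + 1 - E.k + j - 1 = j), (by omega : E.k + 1 - 1 = E.k),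
          if_pos (le_refl E.k)]
        exact hle
      · simp only [if_neg (by omega : ¬(l ≤ E.k)), if_neg (by omega : ¬(l - 1 ≤ E.k))]
        have e1 : l - 1 - E.k + j - 1 = (l - E.k + j - 1) - 1 := by omega
        rw [e1]
        exact C.hdec (l - E.k + j - 1) (by omega) (by omega)
  hmem := by
    intro l hl1 hlk x hx1 hx2
    rcases Nat.lt_or_ge l (E.k + 1) with h | h
    · simp only [if_pos (by omega : l ≤ E.k), if_pos (by omega : l - 1 ≤ E.k)] at hx1 hx2 ⊢
      exact E.hmem l hl1 (by omega) x hx1 hx2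
    · rcases Nat.lt_or_ge l (E.k + 2) with h2 | h2
      · have hleq : l = E.k + 1 := by omega
        subst hleq
        simp only [if_neg (by omega : ¬(E.k + 1 ≤ E.k)), if_pos (by omega : E.k+1-1 ≤ E.k),
          (by omega : E.k + 1 - E.k + j - 1 = j), (by omega : E.k + 1 - 1 = E.k),
          if_pos (le_refl E.k)] at hx1 hx2 ⊢
        have hlow : C.a j ∈ specS G c (C.v j) :=
          C.hmem j hj1 hj2 (C.a j) le_rfl (C.hdec j hj1 hj2)
        have hup : E.a E.k ∈ specS G c (C.v j) := by
          rw [← hcol]; exact spec_symm hadj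
        exact hInt _ _ hlow _ hup x hx1 hx2
      · simp only [if_neg (by omega : ¬(l ≤ E.k)), if_neg (by omega : ¬(l - 1 ≤ E.k))] at hx1 hx2 ⊢
        have e1 : l - 1 - E.k + j - 1 = (l - E.k + j - 1) - 1 := by omega
        rw [e1] at hx2
        exact C.hmem (l - E.k + j - 1) (by omega) (by omega) x hx1 hx2
  hlink := by
    intro l hl1 hlk
    rcases Nat.lt_or_ge l E.k with h | h
    · simp only [if_pos (by omega : l ≤ E.k), if_pos (by omega : l + 1 ≤ E.k)]
      exact E.hlink l hl1 h
    · rcases Nat.lt_or_ge l (E.k + 1) with h2 | h2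
      · have hleq : l = E.k := by omega
        subst hleq
        simp only [if_pos (le_refl E.k), if_neg (by omega : ¬(E.k + 1 ≤ E.k)),
          (by omega : E.k + 1 - E.k + j - 1 = j)]
        exact ⟨hadj, hcol⟩
      · simp only [if_neg (by omega : ¬(l ≤ E.k)), if_neg (by omega : ¬(l + 1 ≤ E.k))]
        have e1 : l + 1 - E.k + j - 1 = (l - E.k + j - 1) + 1 := by omega
        rw [e1]
        exact C.hlink (l - E.k + j - 1) (by omega) (by omega)

lemma ATTACH_k (hInt : IntHyp G c) (E C : BChain G c t) (j hj1 hj2 hadj hcol hle) :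
    (ATTACH hInt E C j hj1 hj2 hadj hcol hle).k = E.k + 1 + (C.k - j) := rfl
lemma ATTACH_v (hInt : IntHyp G c) (E C : BChain G c t) (j hj1 hj2 hadj hcol hle) (l : ℕ) :
    (ATTACH hInt E C j hj1 hj2 hadj hcol hle).v l
      = if l ≤ E.k then E.v l else C.v (l - E.k + j - 1) := rfl
lemma ATTACH_a (hInt : IntHyp G c) (E C : BChain G c t) (j hj1 hj2 hadj hcol hle) (l : ℕ) :
    (ATTACH hInt E C j hj1 hj2 hadj hcol hle).a l
      = if l ≤ E.k then E.a l else C.a (l - E.k + j - 1) := rfl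

lemma ATTACH_bottom (hInt : IntHyp G c) (E C : BChain G c t) (j hj1 hj2 hadj hcol hle) :
    (ATTACH hInt E C j hj1 hj2 hadj hcol hle).a
      (ATTACH hInt E C j hj1 hj2 hadj hcol hle).k = C.a C.k := by
  rw [ATTACH_a, ATTACH_k]
  rw [if_neg (by omega : ¬(E.k + 1 + (C.k - j) ≤ E.k)),
    (by omega : E.k + 1 + (C.k - j) - E.k + j - 1 = C.k)]

/-- The one-block chain at an endpoint of an edge of color `t`. -/
def base (x : V) (hx : t ∈ specS G c x) (ht : 1 ≤ t) : BChain G c t where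
  k := 1
  v := fun _ => x
  a := fun _ => t
  hk := le_refl 1
  ha0 := rfl
  hdec := by intro i _ _; exact le_refl t
  hmem := by
    intro i _ _ y hy1 hy2
    have : y = t := le_antisymm hy2 hy1
    subst this; exact hx
  hlink := by intro i h1 h2; omega

/-- Bottom cuts of chains. -/
def Reach (G : SimpleGraph V) (c : Sym2 V → ℕ) (t : ℕ) : Set ℕ :=
  {m | ∃ C : BChain G c t, C.a C.k = m}

/-- Color `γ` is covered at `x` by some chain block. -/
def Cov (G : SimpleGraph V) (c : Sym2 V → ℕ) (t : ℕ) (γ : ℕ) (x : V) : Prop :=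
  ∃ C : BChain G c t, ∃ i, 1 ≤ i ∧ i ≤ C.k ∧ C.v i = x ∧ C.a i ≤ γ ∧ γ ≤ C.a (i-1)

lemma cov_mem {γ : ℕ} {x : V} (h : Cov G c t γ x) : γ ∈ specS G c x := by
  obtain ⟨C, i, h1, h2, h3, h4, h5⟩ := h
  rw [← h3]; exact C.hmem i h1 h2 γ h4 h5

lemma cov_deepen (hInt : IntHyp G c) {γ δ : ℕ} {x : V} (h : Cov G c t γ x)
    (hδ : δ ∈ specS G c x) (hle : δ ≤ γ) :
    Cov G c t δ x ∧ ∃ m ∈ Reach G c t, m ≤ δ := by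
  obtain ⟨C, i, h1, h2, h3, h4, h5⟩ := h
  have hsp : min δ (C.a i) ∈ specS G c (C.v i) := by
    rcases min_choice δ (C.a i) with h | h <;> rw [h]
    · rw [h3]; exact hδ
    · exact C.hmem i h1 h2 _ le_rfl (C.hdec i h1 h2)
  set C' := TR hInt C i (min δ (C.a i)) h1 h2
    (le_trans (min_le_right _ _) (C.hdec i h1 h2)) hsp with hC'
  have hak : C'.a C'.k = min δ (C.a i) := by
    rw [hC', TR_a, TR_k, if_pos rfl]
  constructor
  · refine ⟨C', i, h1, le_refl _, h3, ?_, ?_⟩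
    · rw [hC', TR_a, if_pos rfl]; exact min_le_left _ _
    · rw [hC', TR_a, if_neg (by omega : ¬(i-1 = i))]
      exact le_trans hle h5
  · exact ⟨min δ (C.a i), ⟨C', hak⟩, min_le_left _ _⟩

lemma cov_transfer (hInt : IntHyp G c) {γ : ℕ} {x y : V} (h : Cov G c t γ x)
    (hadj : G.Adj x y) (hcol : c s(x, y) = γ) : Cov G c t γ y := by
  obtain ⟨C, i, h1, h2, h3, h4, h5⟩ := h
  have hspx : γ ∈ specS G c (C.v i) := by rw [h3]; exact hcol ▸ spec_self hadj
  set D := TR hInt C i γ h1 h2 h5 hspx with hD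
  have hDk : D.k = i := rfl
  have hDbot : D.a D.k = γ := by rw [hD, TR_a, TR_k, if_pos rfl]
  have hDv : D.v D.k = x := by rw [hD, TR_v, TR_k]; exact h3
  have hadj' : G.Adj (D.v D.k) y := by rw [hDv]; exact hadj
  have hcol' : c s(D.v D.k, y) = D.a D.k := by rw [hDv, hDbot]; exact hcol
  have hspy : γ ∈ specS G c y := hcol ▸ spec_symm hadj
  set C' := EXT hInt D y γ hadj' hcol' (le_of_eq hDbot.symm) hspy with hC'
  refine ⟨C', D.k + 1, by omega, by rw [hC', EXT_k], ?_, ?_, ?_⟩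
  · rw [hC', EXT_v, if_pos rfl]
  · rw [hC', EXT_a, if_pos rfl]
  · rw [hC', EXT_a, if_neg (by omega : ¬(D.k + 1 - 1 = D.k + 1)),
      (by omega : D.k + 1 - 1 = D.k), hDbot]

lemma chain_sweep (C : BChain G c t) {γ : ℕ} (h1 : C.a C.k ≤ γ) (h2 : γ ≤ t) :
    ∃ i, 1 ≤ i ∧ i ≤ C.k ∧ C.a i ≤ γ ∧ γ ≤ C.a (i-1) := by
  have hex : ∃ n, C.a n ≤ γ := ⟨C.k, h1⟩
  set i₀ := Nat.find hex with hi₀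
  have hfind : C.a i₀ ≤ γ := Nat.find_spec hex
  have hle : i₀ ≤ C.k := Nat.find_min' hex h1
  rcases Nat.eq_zero_or_pos i₀ with h | h
  · -- then t ≤ γ so γ = t; block 1 works
    rw [h] at hfind
    rw [C.ha0] at hfind
    have : γ = t := le_antisymm h2 hfind
    subst this
    refine ⟨1, le_refl _, C.hk, ?_, ?_⟩
    · have := C.a_le_t 1 C.hk; exact this
    · simp only [Nat.sub_self]; rw [C.ha0]
  · have hmin : ¬ C.a (i₀ - 1) ≤ γ := Nat.find_min hex (by omega)
    exact ⟨i₀, h, hle, hfind, by omega⟩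

/-- Shortcut across a bridge edge from `C.v p` to `C.v q`. -/
lemma spliceA_exists (hInt : IntHyp G c) (C : BChain G c t) (p q γp : ℕ)
    (hp1 : 1 ≤ p) (hpq : p < q) (hq : q ≤ C.k)
    (hadj : G.Adj (C.v p) (C.v q)) (hcol : c s(C.v p, C.v q) = γp)
    (hγ1 : C.a q ≤ γp) (hγ2 : γp ≤ C.a (p-1)) :
    ∃ C' : BChain G c t, C'.k = p + 1 + (C.k - q) ∧ C'.a C'.k = C.a C.k := by
  have hsp : γp ∈ specS G c (C.v p) := hcol ▸ spec_self hadj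
  set D := TR hInt C p γp hp1 (by omega) hγ2 hsp with hD
  have hDk : D.k = p := rfl
  have hDv : D.v D.k = C.v p := rfl
  have hDa : D.a D.k = γp := by rw [hD, TR_a, TR_k, if_pos rfl]
  refine ⟨ATTACH hInt D C q (by omega) hq (by rw [hDv]; exact hadj)
    (by rw [hDv, hDa]; exact hcol) (by rw [hDa]; exact hγ1), ?_, ?_⟩
  · rw [ATTACH_k, hDk]
  · rw [ATTACH_bottom]

/-- Shortcut across two bridge edges through an intermediate vertex `u`. -/
lemma splice2_exists (hInt : IntHyp G c) (C : BChain G c t) (p q γp γq : ℕ) (u : V)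
    (hp1 : 1 ≤ p) (hpq : p < q) (hq : q ≤ C.k)
    (hadj1 : G.Adj (C.v p) u) (hcol1 : c s(C.v p, u) = γp)
    (hadj2 : G.Adj u (C.v q)) (hcol2 : c s(u, C.v q) = γq)
    (hγq : C.a q ≤ γq) (h12 : γq ≤ γp) (hγ2 : γp ≤ C.a (p-1)) :
    ∃ C' : BChain G c t, C'.k = p + 2 + (C.k - q) ∧ C'.a C'.k = C.a C.k ∧
      (∀ l, l < p → C'.a l = C.a l) ∧ C'.a p = γp ∧ C'.a (p+1) = γq ∧
      (∀ l, p + 2 ≤ l → C'.a l = C.a (l + q - p - 2)) := by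
  have hsp : γp ∈ specS G c (C.v p) := hcol1 ▸ spec_self hadj1
  set D := TR hInt C p γp hp1 (by omega) hγ2 hsp with hD
  have hDk : D.k = p := rfl
  have hDv : D.v D.k = C.v p := rfl
  have hDa : D.a D.k = γp := by rw [hD, TR_a, TR_k, if_pos rfl]
  have hspu : γq ∈ specS G c u := hcol2 ▸ spec_self hadj2
  set E := EXT hInt D u γq (by rw [hDv]; exact hadj1) (by rw [hDv, hDa]; exact hcol1)
    (by rw [hDa]; exact h12) hspu with hE
  have hEk : E.k = p + 1 := by rw [hE, EXT_k, hDk]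
  have hEv : E.v E.k = u := by rw [hE, EXT_v, EXT_k, if_pos rfl]
  have hEa : E.a E.k = γq := by rw [hE, EXT_a, EXT_k, if_pos rfl]
  refine ⟨ATTACH hInt E C q (by omega) hq (by rw [hEv]; exact hadj2)
    (by rw [hEv, hEa]; exact hcol2) (by rw [hEa]; exact hγq), ?_, ?_, ?_, ?_, ?_, ?_⟩
  · rw [ATTACH_k, hEk]
  · rw [ATTACH_bottom]
  · intro l hl
    rw [ATTACH_a, if_pos (by omega : l ≤ E.k)]
    show (if l = p + 1 then γq else D.a l) = C.a l
    rw [if_neg (by omega : ¬(l = p + 1)), hD, TR_a, if_neg (by omega : ¬(l = p))]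
  · rw [ATTACH_a, if_pos (by omega : p ≤ E.k)]
    show (if p = p + 1 then γq else D.a p) = γp
    rw [if_neg (by omega : ¬(p = p + 1)), hD, TR_a, if_pos rfl]
  · rw [ATTACH_a, if_pos (by omega : p + 1 ≤ E.k)]
    show (if p + 1 = p + 1 then γq else D.a (p+1)) = γq
    rw [if_pos rfl]
  · intro l hl
    rw [ATTACH_a, if_neg (by omega : ¬(l ≤ E.k)), hEk,
      (by omega : l - (p + 1) + q - 1 = l + q - p - 2)]

/-- A chain with a repeated block vertex can be shortened. -/
lemma merge_exists (hInt : IntHyp G c) (C : BChain G c t) (p q : ℕ)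
    (hp1 : 1 ≤ p) (hpq : p < q) (hq : q ≤ C.k) (heq : C.v p = C.v q) :
    ∃ C' : BChain G c t, C'.k < C.k ∧ C'.a C'.k = C.a C.k := by
  rcases Nat.lt_or_ge q C.k with h | h
  · -- q < C.k : use the link edge from v q = v p to v (q+1)
    obtain ⟨hadj, hcol⟩ := C.hlink q (by omega) h
    rw [← heq] at hadj hcol
    obtain ⟨C', hk, hbot⟩ := spliceA_exists hInt C p (q+1) (C.a q) hp1 (by omega) (by omega)
      hadj hcol (C.hdec (q+1) (by omega) (by omega)) (le_trans (C.mono (p-1) q (by omega) hq) le_rfl)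
    exact ⟨C', by omega, hbot⟩
  · -- q = C.k : truncate at p with bottom cut C.a C.k
    have hqk : q = C.k := by omega
    have hsp : C.a C.k ∈ specS G c (C.v p) := by
      rw [heq, hqk]
      exact C.hmem C.k C.hk le_rfl _ le_rfl (C.hdec C.k C.hk le_rfl)
    have hle : C.a C.k ≤ C.a (p-1) := C.mono (p-1) C.k (by omega) le_rfl
    set C' := TR hInt C p (C.a C.k) hp1 (by omega) hle hsp with hC'
    refine ⟨C', by rw [hC', TR_k]; omega, ?_⟩
    rw [hC', TR_a, TR_k, if_pos rfl]

/-- The subgraph of chain-covered edges. -/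
def GA (G : SimpleGraph V) (c : Sym2 V → ℕ) (t : ℕ) : SimpleGraph V where
  Adj x y := G.Adj x y ∧ (Cov G c t (c s(x,y)) x ∨ Cov G c t (c s(x,y)) y)
  symm := by
    constructor
    intro x y h
    refine ⟨h.1.symm, ?_⟩
    rw [show s(y,x) = s(x,y) from Sym2.eq_swap]
    exact h.2.symm
  loopless := ⟨fun x h => G.loopless.irrefl x h.1⟩

lemma GA_le : GA G c t ≤ G := fun _ _ h => h.1

lemma GA_adj (hInt : IntHyp G c) {x y : V} (h : (GA G c t).Adj x y) :
    G.Adj x y ∧ Cov G c t (c s(x,y)) x ∧ Cov G c t (c s(x,y)) y := by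
  obtain ⟨h1, h2⟩ := h
  rcases h2 with h2 | h2
  · refine ⟨h1, h2, cov_transfer hInt h2 h1 rfl⟩
  · have h3 : Cov G c t (c s(x,y)) x := by
      have := cov_transfer hInt h2 h1.symm (by rw [Sym2.eq_swap])
      exact this
    exact ⟨h1, h3, h2⟩

lemma GA_col_ge (hInt : IntHyp G c) {x y : V} (h : (GA G c t).Adj x y) :
    sInf (Reach G c t) ≤ c s(x,y) := by
  obtain ⟨h1, h2, h3⟩ := GA_adj hInt h
  obtain ⟨-, m, hm, hmle⟩ := cov_deepen hInt h2 (spec_self h1) le_rfl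
  exact le_trans (Nat.sInf_le hm) hmle

/-- The subgraph of edges with colors at most `d`. -/
def GW (G : SimpleGraph V) (c : Sym2 V → ℕ) (d : ℕ) : SimpleGraph V where
  Adj x y := G.Adj x y ∧ c s(x,y) ≤ d
  symm := by
    constructor
    intro x y h
    refine ⟨h.1.symm, ?_⟩
    rw [show s(y,x) = s(x,y) from Sym2.eq_swap]
    exact h.2
  loopless := ⟨fun x h => G.loopless.irrefl x h.1⟩

lemma GW_le {d : ℕ} : GW G c d ≤ G := fun _ _ h => h.1

lemma key [Fintype V] : ∀ t : ℕ, 1 ≤ t → ∀ (G : SimpleGraph V) (c : Sym2 V → ℕ),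
    G.CliqueFree 3 → EProper G c →
    (∀ e ∈ G.edgeSet, 1 ≤ c e ∧ c e ≤ t) →
    (∀ κ, 1 ≤ κ → κ ≤ t → ∃ e ∈ G.edgeSet, c e = κ) →
    IntHyp G c →
    t + 1 ≤ {x : V | ∃ y, G.Adj x y}.ncard := by
  intro t
  induction t using Nat.strong_induction_on with
  | _ t IH =>
  intro ht G c hCF hP hR hU hI
  classical
  -- an edge of color t
  obtain ⟨e, he, hce⟩ := hU t ht le_rfl
  have hex : ∃ x y : V, G.Adj x y ∧ c s(x,y) = t := by
    revert he hce
    induction e using Sym2.ind with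
    | _ x y =>
      intro he hce
      exact ⟨x, y, G.mem_edgeSet.mp he, hce⟩
  obtain ⟨x₀, y₀, hadj₀, hcol₀⟩ := hex
  have hspec₀ : t ∈ specS G c x₀ := ⟨y₀, hadj₀, hcol₀⟩
  have hne : (Reach G c t).Nonempty := ⟨t, base x₀ hspec₀ ht, rfl⟩
  set s := sInf (Reach G c t) with hs
  have hs_mem : s ∈ Reach G c t := Nat.sInf_mem hne
  have hreach_bounds : ∀ m ∈ Reach G c t, 1 ≤ m ∧ m ≤ t := by
    rintro m ⟨C, hC⟩
    have hmem : m ∈ specS G c (C.v C.k) := by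
      rw [← hC]
      exact C.hmem C.k C.hk le_rfl _ le_rfl (C.hdec C.k C.hk le_rfl)
    obtain ⟨u, hu, hcu⟩ := hmem
    have := hR s(C.v C.k, u) (G.mem_edgeSet.mpr hu)
    omega
  have hs1 : 1 ≤ s := (hreach_bounds s hs_mem).1
  have hst : s ≤ t := (hreach_bounds s hs_mem).2
  rcases Nat.lt_or_ge 1 s with hs2 | hs2
  · -- case 2 ≤ s : split into the chain-covered high part and the low part
    set d := s - 1 with hd
    have hd1 : 1 ≤ d := by omega
    have hAcard : t - d + 1 ≤ {x : V | ∃ y, (GA G c t).Adj x y}.ncard := by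
      refine IH (t - d) (by omega) (by omega) (GA G c t) (fun e => c e - d)
        (hCF.anti GA_le) ?_ ?_ ?_ ?_
      · intro v a b hva hvb hab
        have h1 := hP v a b hva.1 hvb.1 hab
        have h2 := GA_col_ge hI hva
        have h3 := GA_col_ge hI hvb
        rw [← hs] at h2 h3
        simp only []
        omega
      · intro e hee
        revert hee
        induction e using Sym2.ind with
        | _ x y =>
          intro hee
          have hadj : (GA G c t).Adj x y := (GA G c t).mem_edgeSet.mp hee
          have h1 := GA_col_ge hI hadj
          rw [← hs] at h1
          have h2 := (hR _ (G.mem_edgeSet.mpr hadj.1)).2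
          constructor <;> omega
      · intro κ hκ1 hκ2
        obtain ⟨Cs, hCs⟩ := hs_mem
        obtain ⟨i, hi1, hi2, hia, hib⟩ := chain_sweep Cs (γ := κ + d)
          (by rw [hCs]; omega) (by omega)
        have hcovi : Cov G c t (κ + d) (Cs.v i) := ⟨Cs, i, hi1, hi2, rfl, hia, hib⟩
        obtain ⟨u, hu, hcu⟩ := Cs.hmem i hi1 hi2 _ hia hib
        refine ⟨s(Cs.v i, u), (GA G c t).mem_edgeSet.mpr ⟨hu, Or.inl ?_⟩, ?_⟩
        · rw [hcu]; exact hcovi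
        · rw [hcu]; omega
      · intro x α hα β hβ κ hκ1 hκ2
        obtain ⟨ua, hua, hca⟩ := hα
        obtain ⟨ub, hub, hcb⟩ := hβ
        simp only [] at hca hcb
        have hsa := GA_col_ge hI hua
        have hsb := GA_col_ge hI hub
        rw [← hs] at hsa hsb
        have hga : c s(x,ua) ∈ specS G c x := spec_self hua.1
        have hgb : c s(x,ub) ∈ specS G c x := spec_self hub.1
        have hκs : κ + d ∈ specS G c x :=
          hI x _ hga _ hgb (κ + d) (by omega) (by omega)
        have hcovb : Cov G c t (c s(x,ub)) x := (GA_adj hI hub).2.1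
        have hcovκ : Cov G c t (κ + d) x := (cov_deepen hI hcovb hκs (by omega)).1
        obtain ⟨u, hu, hcu⟩ := hκs
        refine ⟨u, ⟨hu, Or.inl (by rw [hcu]; exact hcovκ)⟩, ?_⟩
        simp only []; rw [hcu]; omega
    have hWcard : d + 1 ≤ {x : V | ∃ y, (GW G c d).Adj x y}.ncard := by
      refine IH d (by omega) hd1 (GW G c d) c (hCF.anti GW_le) ?_ ?_ ?_ ?_
      · intro v a b hva hvb hab
        exact hP v a b hva.1 hvb.1 hab
      · intro e hee
        revert hee
        induction e using Sym2.ind with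
        | _ x y =>
          intro hee
          have hadj : (GW G c d).Adj x y := (GW G c d).mem_edgeSet.mp hee
          exact ⟨(hR _ (G.mem_edgeSet.mpr hadj.1)).1, hadj.2⟩
      · intro κ h1 h2
        obtain ⟨e, he, hce⟩ := hU κ h1 (by omega)
        revert he hce
        induction e using Sym2.ind with
        | _ x y =>
          intro he hce
          exact ⟨s(x,y), (GW G c d).mem_edgeSet.mpr ⟨G.mem_edgeSet.mp he, by omega⟩, hce⟩
      · intro x α hα β hβ κ h1 h2
        obtain ⟨ua, hua, hca⟩ := hα
        obtain ⟨ub, hub, hcb⟩ := hβ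
        have hκs : κ ∈ specS G c x :=
          hI x _ (spec_self hua.1) _ (spec_self hub.1) κ (hca ▸ h1) (hcb ▸ h2)
        obtain ⟨u, hu, hcu⟩ := hκs
        have hubd : c s(x,ub) ≤ d := hub.2
        exact ⟨u, ⟨hu, by rw [hcu]; omega⟩, hcu⟩
    have hdisj : Disjoint {x : V | ∃ y, (GA G c t).Adj x y} {x : V | ∃ y, (GW G c d).Adj x y} := by
      rw [Set.disjoint_left]
      rintro x ⟨y, hy⟩ ⟨z, hz⟩
      have hcov : Cov G c t (c s(x,y)) x := (GA_adj hI hy).2.1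
      have hsy := GA_col_ge hI hy
      rw [← hs] at hsy
      have hδ : c s(x,z) ∈ specS G c x := spec_self hz.1
      have hδd : c s(x,z) ≤ d := hz.2
      rcases le_or_gt (c s(x,z)) (c s(x,y)) with h | h
      · obtain ⟨-, m, hm, hmle⟩ := cov_deepen hI hcov hδ h
        have hsm := Nat.sInf_le hm
        rw [← hs] at hsm
        omega
      · omega
    have hsub : {x : V | ∃ y, (GA G c t).Adj x y} ∪ {x : V | ∃ y, (GW G c d).Adj x y}
        ⊆ {x : V | ∃ y, G.Adj x y} := by
      rintro x (⟨y, hy⟩ | ⟨y, hy⟩)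
      exacts [⟨y, hy.1⟩, ⟨y, hy.1⟩]
    have hun := Set.ncard_union_eq hdisj (Set.toFinite _) (Set.toFinite _)
    have hle := Set.ncard_le_ncard hsub (Set.toFinite _)
    omega
  · -- case s = 1 : a full chain exists; count via an optimal chain
    have hs2 : s = 1 := by omega
    -- minimal number of blocks among chains with bottom cut 1
    have hKne : {m : ℕ | ∃ C : BChain G c t, C.a C.k = 1 ∧ C.k = m}.Nonempty := by
      obtain ⟨C₁, hC₁⟩ := hs_mem
      exact ⟨C₁.k, C₁, by rw [hC₁, hs2], rfl⟩
    set k₀ := sInf {m : ℕ | ∃ C : BChain G c t, C.a C.k = 1 ∧ C.k = m} with hk₀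
    have hk₀K := Nat.sInf_mem hKne
    rw [← hk₀] at hk₀K
    have hOptK : ∀ C' : BChain G c t, C'.a C'.k = 1 → k₀ ≤ C'.k := by
      intro C' h
      exact Nat.sInf_le ⟨C', h, rfl⟩
    -- maximal weight among such chains with k₀ blocks
    have hNSne : {n : ℕ | ∃ C : BChain G c t, C.a C.k = 1 ∧ C.k = k₀ ∧
        ∑ l ∈ Finset.Icc 1 C.k, (t+2)^(C.a l) = n}.Nonempty := by
      obtain ⟨C₁, h1, h2⟩ := hk₀K
      exact ⟨_, C₁, h1, h2, rfl⟩
    have hNSbdd : BddAbove {n : ℕ | ∃ C : BChain G c t, C.a C.k = 1 ∧ C.k = k₀ ∧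
        ∑ l ∈ Finset.Icc 1 C.k, (t+2)^(C.a l) = n} := by
      refine ⟨k₀ * (t+2)^t, ?_⟩
      rintro n ⟨C, h1, h2, rfl⟩
      calc ∑ l ∈ Finset.Icc 1 C.k, (t+2)^(C.a l)
          ≤ (Finset.Icc 1 C.k).card • (t+2)^t := by
            refine Finset.sum_le_card_nsmul _ _ _ ?_
            intro l hl
            rw [Finset.mem_Icc] at hl
            exact Nat.pow_le_pow_right (by omega) (C.a_le_t l hl.2)
        _ = k₀ * (t+2)^t := by
            rw [smul_eq_mul, Nat.card_Icc, h2, Nat.add_sub_cancel]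
    obtain ⟨CC, hbotC, hCk, hCN⟩ := Nat.sSup_mem hNSne hNSbdd
    have hOptN : ∀ C' : BChain G c t, C'.a C'.k = 1 → C'.k = k₀ →
        ∑ l ∈ Finset.Icc 1 C'.k, (t+2)^(C'.a l) ≤ ∑ l ∈ Finset.Icc 1 CC.k, (t+2)^(CC.a l) := by
      intro C' h1 h2
      rw [hCN]
      exact le_csSup hNSbdd ⟨C', h1, h2, rfl⟩
    -- the owner of each color
    have hexP : ∀ γ : ℕ, ∃ i, 1 ≤ i ∧ i ≤ CC.k ∧ (1 ≤ γ → CC.a i ≤ γ) := by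
      intro γ
      exact ⟨CC.k, CC.hk, le_rfl, fun h => by rw [hbotC]; exact h⟩
    set own : ℕ → ℕ := fun γ => Nat.find (hexP γ) with hownDef
    have hown : ∀ γ, 1 ≤ γ → γ ≤ t →
        1 ≤ own γ ∧ own γ ≤ CC.k ∧ CC.a (own γ) ≤ γ ∧ γ ≤ CC.a (own γ - 1) ∧
          (2 ≤ own γ → γ < CC.a (own γ - 1)) := by
      intro γ h1 h2
      show 1 ≤ Nat.find (hexP γ) ∧ Nat.find (hexP γ) ≤ CC.k ∧
        CC.a (Nat.find (hexP γ)) ≤ γ ∧ γ ≤ CC.a (Nat.find (hexP γ) - 1) ∧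
        (2 ≤ Nat.find (hexP γ) → γ < CC.a (Nat.find (hexP γ) - 1))
      obtain ⟨ha, hb, hc⟩ := Nat.find_spec (hexP γ)
      have hc' := hc h1
      refine ⟨ha, hb, hc', ?_, ?_⟩
      · rcases Nat.lt_or_ge (Nat.find (hexP γ)) 2 with h | h
        · have he1 : Nat.find (hexP γ) = 1 := by omega
          rw [he1]
          simp only [Nat.sub_self]
          rw [CC.ha0]; exact h2
        · have hmin := Nat.find_min (hexP γ)
            (show Nat.find (hexP γ) - 1 < Nat.find (hexP γ) by omega)
          by_contra hcon
          exact hmin ⟨by omega, by omega, fun _ => by omega⟩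
      · intro h
        have hmin := Nat.find_min (hexP γ)
          (show Nat.find (hexP γ) - 1 < Nat.find (hexP γ) by omega)
        by_contra hcon
        exact hmin ⟨by omega, by omega, fun _ => by omega⟩
    have hownMono : ∀ γ δ, 1 ≤ γ → γ ≤ δ → δ ≤ t → own δ ≤ own γ := by
      intro γ δ h1 h2 h3
      obtain ⟨ha, hb, hc, -, -⟩ := hown γ h1 (by omega)
      exact Nat.find_min' (hexP δ) ⟨ha, hb, fun _ => le_trans hc h2⟩
    -- the chosen neighbor of the owner, realizing each color
    have hψex : ∀ γ : ℕ, ∃ u : V, 1 ≤ γ → γ ≤ t →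
        G.Adj (CC.v (own γ)) u ∧ c s(CC.v (own γ), u) = γ := by
      intro γ
      by_cases h : 1 ≤ γ ∧ γ ≤ t
      · obtain ⟨ha, hb, hc, hd, -⟩ := hown γ h.1 h.2
        obtain ⟨u, hu1, hu2⟩ := CC.hmem (own γ) ha hb γ hc hd
        exact ⟨u, fun _ _ => ⟨hu1, hu2⟩⟩
      · exact ⟨x₀, fun h1 h2 => absurd ⟨h1, h2⟩ h⟩
    choose ψ hψ using hψex
    -- no triangles
    have htri : ∀ (x y z : V), G.Adj x y → G.Adj x z → G.Adj y z → False := by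
      intro x y z h1 h2 h3
      exact hCF {x, y, z} (SimpleGraph.is3Clique_triple_iff.mpr ⟨h1, h2, h3⟩)
    -- main injectivity
    have hKey : ∀ γ' γ, 1 ≤ γ' → γ' < γ → γ ≤ t → ψ γ = ψ γ' → False := by
      intro γ' γ h1 h2 h3 heq
      obtain ⟨hi1, hi2, hi3, hi4, hi5⟩ := hown γ (by omega) h3
      obtain ⟨hj1, hj2, hj3, hj4, hj5⟩ := hown γ' h1 (by omega)
      obtain ⟨hadjγ, hcolγ⟩ := hψ γ (by omega) h3
      obtain ⟨hadjγ', hcolγ'⟩ := hψ γ' h1 (by omega)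
      rw [heq] at hadjγ hcolγ
      have hij : own γ ≤ own γ' := hownMono γ' γ h1 (by omega) h3
      rcases eq_or_lt_of_le hij with hij' | hij'
      · -- same owner: one edge with two colors
        rw [← hij'] at hadjγ' hcolγ'
        rw [hcolγ] at hcolγ'
        omega
      rcases eq_or_lt_of_le (show own γ + 1 ≤ own γ' by omega) with hj2' | hj2'
      · -- adjacent owners: triangle
        obtain ⟨hlad, hlcol⟩ := CC.hlink (own γ) hi1 (by omega)
        have hvj : G.Adj (CC.v (own γ + 1)) (ψ γ') := by rw [hj2']; exact hadjγ'
        exact htri _ _ _ hlad hadjγ hvj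
      -- own γ' ≥ own γ + 2
      rcases eq_or_lt_of_le hi3 with hγai | hγai
      · -- γ = CC.a (own γ) : forced equal to the link edge
        obtain ⟨hlad, hlcol⟩ := CC.hlink (own γ) hi1 (by omega)
        have huv : ψ γ' = CC.v (own γ + 1) := by
          by_contra hne
          exact hP (CC.v (own γ)) (ψ γ') (CC.v (own γ + 1)) hadjγ hlad hne
            (by rw [hcolγ, hlcol]; exact hγai.symm)
        rcases eq_or_lt_of_le (show own γ + 2 ≤ own γ' by omega) with hj3' | hj3'
        · -- own γ' = own γ + 2 : one pair, two colors
          obtain ⟨hlad2, hlcol2⟩ := CC.hlink (own γ + 1) (by omega) (by omega)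
          have hlcol2' : c s(CC.v (own γ + 1), CC.v (own γ + 2)) = CC.a (own γ + 1) := hlcol2
          have hthis : c s(CC.v (own γ'), ψ γ') = γ' := hcolγ'
          rw [huv, ← hj3'] at hthis
          rw [Sym2.eq_swap] at hthis
          rw [hlcol2'] at hthis
          have h5 := hj5 (by omega)
          have hj1e : own γ' - 1 = own γ + 1 := by omega
          rw [hj1e] at h5
          omega
        · -- own γ' ≥ own γ + 3 : shortcut, fewer blocks
          have hadjb : G.Adj (CC.v (own γ + 1)) (CC.v (own γ')) := by
            rw [← huv]; exact hadjγ'.symm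
          have hcolb : c s(CC.v (own γ + 1), CC.v (own γ')) = γ' := by
            rw [Sym2.eq_swap, ← huv]; exact hcolγ'
          have hγ'le : γ' ≤ CC.a (own γ + 1 - 1) := by
            have h5 := hj5 (by omega)
            have hmono := CC.mono (own γ + 1) (own γ' - 1) (by omega) (by omega)
            have he : own γ + 1 - 1 = own γ := by omega
            rw [he]
            have hmono2 := CC.mono (own γ) (own γ' - 1) (by omega) (by omega)
            omega
          obtain ⟨C', hC'k, hC'bot⟩ := spliceA_exists hI CC (own γ + 1) (own γ') γ'
            (by omega) (by omega) hj2 hadjb hcolb hj3 hγ'le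
          have hko := hOptK C' (by rw [hC'bot, hbotC])
          rw [hC'k] at hko
          omega
      · -- CC.a (own γ) < γ : splice through ψ γ'
        have hadjb2 : G.Adj (ψ γ') (CC.v (own γ')) := hadjγ'.symm
        have hcolb2 : c s(ψ γ', CC.v (own γ')) = γ' := by
          rw [Sym2.eq_swap]; exact hcolγ'
        obtain ⟨C', hk', hbot', hpre', hpi', hpi1', hsuf'⟩ :=
          splice2_exists hI CC (own γ) (own γ') γ γ' (ψ γ') hi1 (by omega) hj2
            hadjγ hcolγ hadjb2 hcolb2 hj3 (by omega) hi4
        rcases eq_or_lt_of_le (show own γ + 2 ≤ own γ' by omega) with hj3' | hj3'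
        · -- own γ' = own γ + 2 : same k, strictly bigger weight
          have hkk : C'.k = CC.k := by rw [hk']; omega
          have hNle := hOptN C' (by rw [hbot', hbotC]) (by rw [hkk, hCk])
          have hi_mem : own γ ∈ Finset.Icc 1 CC.k := Finset.mem_Icc.mpr ⟨hi1, by omega⟩
          have hi1_mem : own γ + 1 ∈ (Finset.Icc 1 CC.k).erase (own γ) :=
            Finset.mem_erase.mpr ⟨by omega, Finset.mem_Icc.mpr ⟨by omega, by omega⟩⟩
          have hsplit : ∀ g : ℕ → ℕ, ∑ l ∈ Finset.Icc 1 CC.k, g l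
              = g (own γ) + (g (own γ + 1) +
                ∑ l ∈ ((Finset.Icc 1 CC.k).erase (own γ)).erase (own γ + 1), g l) := by
            intro g
            rw [← Finset.add_sum_erase _ g hi_mem, ← Finset.add_sum_erase _ g hi1_mem]
          have hrest : ∑ l ∈ ((Finset.Icc 1 CC.k).erase (own γ)).erase (own γ + 1),
              (t+2)^(C'.a l) = ∑ l ∈ ((Finset.Icc 1 CC.k).erase (own γ)).erase (own γ + 1),
              (t+2)^(CC.a l) := by
            refine Finset.sum_congr rfl ?_
            intro l hl
            have hl1 := Finset.mem_erase.mp hl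
            have hl2 := Finset.mem_erase.mp hl1.2
            rcases Nat.lt_or_ge l (own γ) with h | h
            · rw [hpre' l h]
            · have hge : own γ + 2 ≤ l := by omega
              rw [hsuf' l hge, (by omega : l + own γ' - own γ - 2 = l)]
          have hsum' : ∑ l ∈ Finset.Icc 1 C'.k, (t+2)^(C'.a l)
              = (t+2)^γ + ((t+2)^γ' +
                ∑ l ∈ ((Finset.Icc 1 CC.k).erase (own γ)).erase (own γ + 1), (t+2)^(CC.a l)) := by
            rw [hkk, hsplit (fun l => (t+2)^(C'.a l)), hpi', hpi1', hrest]
          have hsumCC : ∑ l ∈ Finset.Icc 1 CC.k, (t+2)^(CC.a l)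
              = (t+2)^(CC.a (own γ)) + ((t+2)^(CC.a (own γ + 1)) +
                ∑ l ∈ ((Finset.Icc 1 CC.k).erase (own γ)).erase (own γ + 1), (t+2)^(CC.a l)) :=
            hsplit _
          -- the weight inequality
          have hdec1 : CC.a (own γ + 1) ≤ CC.a (own γ) := by
            have := CC.hdec (own γ + 1) (by omega) (by omega)
            simpa using this
          have e1 : (t+2)^(CC.a (own γ) + 1) ≤ (t+2)^γ :=
            Nat.pow_le_pow_right (by omega) (by omega)
          have e2 : (t+2)^(CC.a (own γ + 1)) ≤ (t+2)^(CC.a (own γ)) :=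
            Nat.pow_le_pow_right (by omega) hdec1
          have e3 : (t+2)^(CC.a (own γ) + 1) = (t+2)^(CC.a (own γ)) * (t+2) := pow_succ _ _
          have e4 : 1 ≤ (t+2)^γ' := Nat.one_le_pow _ _ (by omega)
          have e5 : (t+2)^(CC.a (own γ)) * 2 ≤ (t+2)^(CC.a (own γ)) * (t+2) :=
            Nat.mul_le_mul_left _ (by omega)
          omega
        · -- own γ' ≥ own γ + 3 : fewer blocks
          have hko := hOptK C' (by rw [hbot', hbotC])
          rw [hk'] at hko
          omega
    -- injectivity against the top vertex
    have hV1 : ∀ γ, 1 ≤ γ → γ ≤ t → ψ γ = CC.v 1 → False := by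
      intro γ h1 h2 heq
      obtain ⟨hi1, hi2, hi3, hi4, hi5⟩ := hown γ h1 h2
      obtain ⟨hadjγ, hcolγ⟩ := hψ γ h1 h2
      rw [heq] at hadjγ hcolγ
      rcases eq_or_lt_of_le hi1 with h1' | h1'
      · rw [← h1'] at hadjγ
        exact G.loopless.irrefl _ hadjγ
      rcases eq_or_lt_of_le (show 2 ≤ own γ by omega) with h2' | h2'
      · obtain ⟨hlad, hlcol⟩ := CC.hlink 1 le_rfl (by omega)
        have hlcol1 : c s(CC.v 1, CC.v 2) = CC.a 1 := hlcol
        have h12 : own γ = 2 := by omega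
        have hthis : c s(CC.v (own γ), CC.v 1) = γ := hcolγ
        rw [h12] at hthis
        rw [Sym2.eq_swap] at hthis
        rw [hlcol1] at hthis
        have h5 := hi5 (by omega)
        rw [h12] at h5
        have he21 : (2:ℕ) - 1 = 1 := rfl
        rw [he21] at h5
        omega
      · have hadjb : G.Adj (CC.v 1) (CC.v (own γ)) := hadjγ.symm
        have hcolb : c s(CC.v 1, CC.v (own γ)) = γ := by
          rw [Sym2.eq_swap]; exact hcolγ
        have hle0 : γ ≤ CC.a (1-1) := by
          simp only [Nat.sub_self]
          rw [CC.ha0]; exact h2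
        obtain ⟨C', hk', hbot'⟩ := spliceA_exists hI CC 1 (own γ) γ le_rfl (by omega)
          hi2 hadjb hcolb hi3 hle0
        have hko := hOptK C' (by rw [hbot', hbotC])
        rw [hk'] at hko
        omega
    -- the injection into the active vertices
    have hmaps : ∀ n ∈ Set.Iio (t+1),
        (fun n => if n = 0 then CC.v 1 else ψ n) n ∈ {x : V | ∃ y, G.Adj x y} := by
      intro n hn
      rw [Set.mem_Iio] at hn
      by_cases h0 : n = 0
      · subst h0
        simp only [if_pos rfl]
        obtain ⟨u, hu, -⟩ := CC.hmem 1 le_rfl CC.hk (CC.a 1) le_rfl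
          (by simpa using CC.hdec 1 le_rfl CC.hk)
        exact ⟨u, hu⟩
      · obtain ⟨hadj, -⟩ := hψ n (by omega) (by omega)
        simp only [if_neg h0]
        exact ⟨_, hadj.symm⟩
    have hinj : Set.InjOn (fun n => if n = 0 then CC.v 1 else ψ n)
        (Set.Iio (t+1)) := by
      have haux : ∀ p q : ℕ, p < q → q ≤ t →
          (if p = 0 then CC.v 1 else ψ p) = (if q = 0 then CC.v 1 else ψ q) → False := by
        intro p q hpq hqt heq
        rw [if_neg (by omega : ¬(q = 0))] at heq
        by_cases hp0 : p = 0
        · rw [if_pos hp0] at heq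
          exact hV1 q (by omega) hqt heq.symm
        · rw [if_neg hp0] at heq
          exact hKey p q (by omega) hpq hqt heq.symm
      intro m hm n hn hmn
      rw [Set.mem_Iio] at hm hn
      by_contra hne
      rcases Nat.lt_or_ge m n with h | h
      · exact haux m n h (by omega) hmn
      · exact haux n m (by omega) (by omega) hmn.symm
    have hcard := Set.ncard_le_ncard_of_injOn _ hmaps hinj (Set.toFinite _)
    rw [show (Set.Iio (t+1) : Set ℕ) = ↑(Finset.Iio (t+1)) from (Finset.coe_Iio _).symm,
      Set.ncard_coe_finset, Nat.card_Iio] at hcard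
    exact hcard

end IC


/-- If a triangle-free graph admits an interval t-coloring, then t ≤ |V(G)| − 1. -/
theorem stmt18 {V : Type*} [Fintype V] (G : SimpleGraph V) (hG : G.CliqueFree 3)
    (t : ℕ) (c : Sym2 V → ℕ) (hc : IsIntCol G c t) :
    t ≤ Fintype.card V - 1 := by
  obtain ⟨hP, hR, hU, hI⟩ := hc
  rcases Nat.eq_zero_or_pos t with h0 | h1
  · subst h0; exact Nat.zero_le _
  · have hkey := IC.key t h1 G c hG hP hR hU hI
    have hsub : {x : V | ∃ y, G.Adj x y} ⊆ Set.univ := Set.subset_univ _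
    have hle := Set.ncard_le_ncard hsub (Set.toFinite _)
    rw [Set.ncard_univ, Nat.card_eq_fintype_card] at hle
    omega
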